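/- Let R_u be the rotation sending unit vector e to a positive multiple of e+u and fixing span{e,u}^⊥. For v parallel to u (v ∈ ℝu), the directional derivative satisfies R_u^{-1}(∂R_u/∂v) = (1/(1+‖u‖²))(v eᵀ - e vᵀ). -/

import Mathlib

open RealInnerProductSpace

noncomputable section

variable {E : Type*} [NormedAddCommGroup E] [InnerProductSpace ℝ E]

/-- The rotation `R_u` sending the unit vector `e` to a positive multiple of `e + u` and
fixing `span{e,u}ᗮ` pointwise, given by its explicit formula, applied to `x`. -/
def Rfun (e u x : E) : E :=
  x - ⟪e, x⟫ • e - (⟪u, x⟫ / ‖u‖ ^ 2) • u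
    + (⟪e, x⟫ / Real.sqrt (1 + ‖u‖ ^ 2)) • (e + u)
    + (⟪u, x⟫ / (‖u‖ ^ 2 * Real.sqrt (1 + ‖u‖ ^ 2))) • (u - ‖u‖ ^ 2 • e)

lemma my_div_diff {f g : E → ℝ} {u : E} (hf : DifferentiableAt ℝ f u)
    (hg : DifferentiableAt ℝ g u) (h0 : g u ≠ 0) :
    DifferentiableAt ℝ (fun u' : E => f u' / g u') u := by
  simp only [div_eq_mul_inv]
  exact hf.mul (hg.inv h0)

lemma Rfun_diff (e x u : E) (hu : u ≠ 0) :
    DifferentiableAt ℝ (fun u' => Rfun e u' x) u := by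
  have hr : (‖u‖:ℝ)^2 ≠ 0 := pow_ne_zero 2 (norm_ne_zero_iff.mpr hu)
  have hs : Real.sqrt (1 + ‖u‖^2) ≠ 0 := by positivity
  have hnorm : DifferentiableAt ℝ (fun u' : E => ‖u'‖^2) u := by
    simp only [← real_inner_self_eq_norm_sq]
    exact differentiableAt_id.inner ℝ differentiableAt_id
  have hinx : DifferentiableAt ℝ (fun u' : E => ⟪u', x⟫) u :=
    differentiableAt_id.inner ℝ (differentiableAt_const x)
  have hsq : DifferentiableAt ℝ (fun u' : E => Real.sqrt (1 + ‖u'‖^2)) u := by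
    have h1 : (1 + ‖u‖^2 : ℝ) ≠ 0 := by positivity
    exact ((differentiableAt_const 1).add hnorm).sqrt h1
  have t1 : DifferentiableAt ℝ (fun u' : E => x - ⟪e, x⟫ • e - (⟪u', x⟫ / ‖u'‖ ^ 2) • u') u :=
    (differentiableAt_const _).sub ((my_div_diff hinx hnorm hr).smul differentiableAt_id)
  have t2 : DifferentiableAt ℝ
      (fun u' : E => (⟪e, x⟫ / Real.sqrt (1 + ‖u'‖ ^ 2)) • (e + u')) u :=
    (my_div_diff (differentiableAt_const _) hsq hs).smul
      ((differentiableAt_const e).add differentiableAt_id)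
  have t3 : DifferentiableAt ℝ
      (fun u' : E => (⟪u', x⟫ / (‖u'‖ ^ 2 * Real.sqrt (1 + ‖u'‖ ^ 2))) • (u' - ‖u'‖ ^ 2 • e)) u :=
    (my_div_diff hinx (hnorm.mul hsq) (mul_ne_zero hr hs)).smul
      (differentiableAt_id.sub (hnorm.smul (differentiableAt_const e)))
  exact (t1.add t2).add t3

lemma Rfun_smul (e u x : E) (hu : u ≠ 0) {c : ℝ} (hc : c ≠ 0) :
    Rfun e (c • u) x =
      (x - ⟪e, x⟫ • e - (⟪u, x⟫ / ‖u‖ ^ 2) • u)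
      + (⟪e, x⟫ / Real.sqrt (1 + c ^ 2 * ‖u‖ ^ 2)) • (e + c • u)
      + (⟪u, x⟫ / (‖u‖ ^ 2 * Real.sqrt (1 + c ^ 2 * ‖u‖ ^ 2))) • (u - (c * ‖u‖ ^ 2) • e) := by
  have hr : (‖u‖:ℝ)^2 ≠ 0 := pow_ne_zero 2 (norm_ne_zero_iff.mpr hu)
  have hs : Real.sqrt (1 + c ^ 2 * ‖u‖ ^ 2) ≠ 0 := by positivity
  have hn : ‖c • u‖ ^ 2 = c ^ 2 * ‖u‖ ^ 2 := by
    rw [norm_smul, mul_pow, Real.norm_eq_abs, sq_abs]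
  unfold Rfun
  rw [real_inner_smul_left, hn]
  match_scalars <;> field_simp <;> ring

lemma g_deriv (e u : E) (a b r : ℝ) (x : E) (hrpos : 0 < r) :
    HasDerivAt (fun c : ℝ =>
      (x - a • e - (b / r) • u)
      + (a / Real.sqrt (1 + c ^ 2 * r)) • (e + c • u)
      + (b / (r * Real.sqrt (1 + c ^ 2 * r))) • (u - (c * r) • e))
      ((a / (Real.sqrt (1 + r) * (1 + r))) • (u - r • e)
        - (b / (Real.sqrt (1 + r) * (1 + r))) • (e + u)) 1 := by
  have h1r : (0:ℝ) < 1 + r := by linarith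
  set t := Real.sqrt (1 + r) with htdef
  have ht2 : t ^ 2 = 1 + r := Real.sq_sqrt h1r.le
  have ht0 : (0:ℝ) < t := Real.sqrt_pos.mpr h1r
  have hval : (1:ℝ) + 1 ^ 2 * r = 1 + r := by ring
  have hpoly : HasDerivAt (fun c : ℝ => 1 + c ^ 2 * r) (2 * r) 1 := by
    simpa using ((hasDerivAt_pow 2 (1:ℝ)).mul_const r).const_add 1
  have hq : HasDerivAt (fun c : ℝ => Real.sqrt (1 + c ^ 2 * r)) (2 * r / (2 * t)) 1 := by
    have := hpoly.sqrt (by rw [hval]; positivity)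
    rwa [hval] at this
  have hs1 : HasDerivAt (fun c : ℝ => a / Real.sqrt (1 + c ^ 2 * r))
      ((0 * t - a * (2 * r / (2 * t))) / t ^ 2) 1 := by
    have := (hasDerivAt_const (1:ℝ) a).div hq (by rw [hval]; positivity)
    rwa [hval] at this
  have hs2 : HasDerivAt (fun c : ℝ => b / (r * Real.sqrt (1 + c ^ 2 * r)))
      ((0 * (r * t) - b * (0 * t + r * (2 * r / (2 * t)))) / (r * t) ^ 2) 1 := by
    have := (hasDerivAt_const (1:ℝ) b).div
      ((hasDerivAt_const (1:ℝ) r).mul hq) (by simp only [Pi.mul_apply, hval]; positivity)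
    simp only [Pi.mul_apply, hval] at this
    exact this
  have hv1 : HasDerivAt (fun c : ℝ => e + c • u) u 1 := by
    simpa using ((hasDerivAt_id (1:ℝ)).smul_const u).const_add e
  have hv2 : HasDerivAt (fun c : ℝ => u - (c * r) • e) (-(r • e)) 1 := by
    have : HasDerivAt (fun c : ℝ => (c * r) • e) ((1 * r + 1 * 0) • e) 1 :=
      ((hasDerivAt_id (1:ℝ)).mul (hasDerivAt_const 1 r)).smul_const e
    have h2 := (hasDerivAt_const (1:ℝ) u).sub this
    simp at h2
    exact h2
  have hsum := ((hasDerivAt_const (1:ℝ) (x - a • e - (b / r) • u)).add (hs1.smul hv1)).add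
    (hs2.smul hv2)
  simp only [hval, one_smul, ← htdef] at hsum
  refine HasDerivAt.congr_deriv hsum ?_
  have ht0' : t ≠ 0 := ht0.ne'
  have hden : t ^ 2 - 1 ≠ 0 := by rw [ht2]; simpa using hrpos.ne'
  have hr' : r = t ^ 2 - 1 := by linarith
  clear_value t
  rw [hr']
  match_scalars <;> field_simp <;> ring

/-- For `v` parallel to `u`, the directional derivative of `u ↦ R_u` in direction `v`
satisfies `R_u⁻¹ (∂R_u/∂v) = (1/(1+‖u‖²))(v eᵀ - e vᵀ)`, i.e.
`∂R_u/∂v = R_u ∘ ((1/(1+‖u‖²))(v eᵀ - e vᵀ))`. -/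
theorem deriv_rotation_parallel [FiniteDimensional ℝ E]
    (e u v : E) (he : ‖e‖ = 1) (hu : u ≠ 0) (heu : ⟪e, u⟫ = 0)
    (hv : ∃ s : ℝ, v = s • u) :
    ∀ x : E, fderiv ℝ (fun u' => Rfun e u' x) u v =
      Rfun e u ((1 / (1 + ‖u‖ ^ 2)) • (⟪e, x⟫ • v - ⟪v, x⟫ • e)) := by
  obtain ⟨s, rfl⟩ := hv
  intro x
  have hrpos : (0:ℝ) < ‖u‖ ^ 2 := pow_pos (norm_pos_iff.mpr hu) 2
  have hF : HasFDerivAt (fun u' => Rfun e u' x)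
      (fderiv ℝ (fun u' => Rfun e u' x) u) u := (Rfun_diff e x u hu).hasFDerivAt
  have hcurve : HasDerivAt (fun c : ℝ => c • u) u 1 := by
    simpa using (hasDerivAt_id (1:ℝ)).smul_const u
  have hF' : HasFDerivAt (fun u' => Rfun e u' x)
      (fderiv ℝ (fun u' => Rfun e u' x) u) ((1:ℝ) • u) := by rwa [one_smul]
  have hcomp : HasDerivAt (fun c : ℝ => Rfun e (c • u) x)
      (fderiv ℝ (fun u' => Rfun e u' x) u u) 1 :=
    hF'.comp_hasDerivAt (l := fun u' => Rfun e u' x) 1 hcurve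
  have hev : (fun c : ℝ => Rfun e (c • u) x) =ᶠ[nhds (1:ℝ)]
      (fun c : ℝ =>
        (x - ⟪e, x⟫ • e - (⟪u, x⟫ / ‖u‖ ^ 2) • u)
        + (⟪e, x⟫ / Real.sqrt (1 + c ^ 2 * ‖u‖ ^ 2)) • (e + c • u)
        + (⟪u, x⟫ / (‖u‖ ^ 2 * Real.sqrt (1 + c ^ 2 * ‖u‖ ^ 2))) • (u - (c * ‖u‖ ^ 2) • e)) := by
    filter_upwards [eventually_ne_nhds one_ne_zero] with c hc
    exact Rfun_smul e u x hu hc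
  have hg : HasDerivAt (fun c : ℝ => Rfun e (c • u) x)
      ((⟪e, x⟫ / (Real.sqrt (1 + ‖u‖ ^ 2) * (1 + ‖u‖ ^ 2))) • (u - ‖u‖ ^ 2 • e)
        - (⟪u, x⟫ / (Real.sqrt (1 + ‖u‖ ^ 2) * (1 + ‖u‖ ^ 2))) • (e + u)) 1 :=
    (g_deriv e u ⟪e, x⟫ ⟪u, x⟫ (‖u‖ ^ 2) x hrpos).congr_of_eventuallyEq hev
  have hD := hcomp.unique hg
  rw [map_smul, hD]
  -- final algebraic identity
  have hee : ⟪e, e⟫ = (1:ℝ) := by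
    rw [real_inner_self_eq_norm_sq, he]; norm_num
  have hue : ⟪u, e⟫ = (0:ℝ) := by rw [real_inner_comm]; exact heu
  have huu : ⟪u, u⟫ = ‖u‖ ^ 2 := real_inner_self_eq_norm_sq u
  rw [real_inner_smul_left]
  unfold Rfun
  simp only [inner_smul_right, inner_sub_right, inner_smul_right, real_inner_smul_left,
    hee, hue, huu, heu]
  have h1r : (0:ℝ) < 1 + ‖u‖ ^ 2 := by linarith
  set t := Real.sqrt (1 + ‖u‖ ^ 2) with htdef
  have ht2 : t ^ 2 = 1 + ‖u‖ ^ 2 := Real.sq_sqrt h1r.le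
  have ht0' : t ≠ 0 := (Real.sqrt_pos.mpr h1r).ne'
  have hden : t ^ 2 - 1 ≠ 0 := by rw [ht2]; simpa using hrpos.ne'
  have hr' : ‖u‖ ^ 2 = t ^ 2 - 1 := by linarith
  clear_value t
  rw [hr']
  match_scalars <;> field_simp <;> ring
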